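/- Let R be a ring with sfli(R^op) ≤ n < ∞, i.e. every injective right R-module has flat dimension at most n as a right module. Then every acyclic complex of flat left R-modules is F-totally acyclic: for every exact complex F of flat left R-modules and every injective right R-module E, the complex E ⊗_R F is exact. -/

import Mathlib

noncomputable section

open LinearMap MulOpposite TensorProduct

/-- A (doubly infinite, cohomologically indexed) complex of `R`-modules. -/
structure Cx (R : Type) [Ring R] where
  X : ℤ → ModuleCat.{0} R
  d : ∀ n : ℤ, X n →ₗ[R] X (n + 1)
  dd : ∀ n : ℤ, (d (n + 1)).comp (d n) = 0

namespace Cx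

variable {R : Type} [Ring R]

/-- The complex is exact (acyclic) everywhere. -/
def Acyclic (C : Cx R) : Prop :=
  ∀ n : ℤ, LinearMap.range (C.d n) = LinearMap.ker (C.d (n + 1))

/-- Exactness of the induced complex `Hom_R(C, M)`. -/
def HomOutExact (C : Cx R) (M : ModuleCat.{0} R) : Prop :=
  ∀ (n : ℤ) (f : C.X (n + 1) →ₗ[R] M), f.comp (C.d n) = 0 →
    ∃ g : C.X (n + 1 + 1) →ₗ[R] M, g.comp (C.d (n + 1)) = f

/-- Exactness of the induced complex `Hom_R(J, C)`. -/
def HomInExact (C : Cx R) (J : ModuleCat.{0} R) : Prop :=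
  ∀ (n : ℤ) (f : J →ₗ[R] C.X (n + 1)), (C.d (n + 1)).comp f = 0 →
    ∃ g : J →ₗ[R] C.X n, (C.d n).comp g = f

end Cx

section Tensor

variable (R : Type) [Ring R]

/-- The defining relations of the tensor product `E ⊗_R M` of a right `R`-module `E`
and a left `R`-module `M`, inside `E ⊗_ℤ M`. -/
def ncRel (E : ModuleCat.{0} Rᵐᵒᵖ) (M : ModuleCat.{0} R) :
    Submodule ℤ (TensorProduct ℤ E M) :=
  Submodule.span ℤ
    {x | ∃ (r : R) (e : E) (m : M), x = (op r • e) ⊗ₜ[ℤ] m - e ⊗ₜ[ℤ] (r • m)}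

/-- The tensor product `E ⊗_R M` of a right `R`-module and a left `R`-module. -/
abbrev NCT (E : ModuleCat.{0} Rᵐᵒᵖ) (M : ModuleCat.{0} R) : Type :=
  TensorProduct ℤ E M ⧸ ncRel R E M

/-- Functoriality of `E ⊗_R -` in the left module argument. -/
def tmapR (E : ModuleCat.{0} Rᵐᵒᵖ) {M N : ModuleCat.{0} R} (f : M →ₗ[R] N) :
    NCT R E M →ₗ[ℤ] NCT R E N :=
  Submodule.mapQ _ _
    (TensorProduct.map LinearMap.id f.toAddMonoidHom.toIntLinearMap) (by
      rw [ncRel, Submodule.span_le]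
      rintro x ⟨r, e, m, rfl⟩
      simp only [SetLike.mem_coe, Submodule.mem_comap, map_sub, TensorProduct.map_tmul,
        LinearMap.id_coe, id_eq, AddMonoidHom.coe_toIntLinearMap, LinearMap.toAddMonoidHom_coe]
      show TensorProduct.map LinearMap.id f.toAddMonoidHom.toIntLinearMap _ ∈ ncRel R E N
      rw [map_sub, TensorProduct.map_tmul, TensorProduct.map_tmul]
      simp only [LinearMap.id_coe, id_eq, AddMonoidHom.coe_toIntLinearMap,
        LinearMap.toAddMonoidHom_coe]
      rw [f.map_smul]
      exact Submodule.subset_span ⟨r, e, f m, rfl⟩)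

/-- Functoriality of `- ⊗_R M` in the right module argument. -/
def tmapL {A B : ModuleCat.{0} Rᵐᵒᵖ} (g : A →ₗ[Rᵐᵒᵖ] B) (M : ModuleCat.{0} R) :
    NCT R A M →ₗ[ℤ] NCT R B M :=
  Submodule.mapQ _ _
    (TensorProduct.map g.toAddMonoidHom.toIntLinearMap LinearMap.id) (by
      rw [ncRel, Submodule.span_le]
      rintro x ⟨r, e, m, rfl⟩
      simp only [SetLike.mem_coe, Submodule.mem_comap, map_sub, TensorProduct.map_tmul,
        LinearMap.id_coe, id_eq, AddMonoidHom.coe_toIntLinearMap, LinearMap.toAddMonoidHom_coe]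
      show TensorProduct.map g.toAddMonoidHom.toIntLinearMap LinearMap.id _ ∈ ncRel R B M
      rw [map_sub, TensorProduct.map_tmul, TensorProduct.map_tmul]
      simp only [LinearMap.id_coe, id_eq, AddMonoidHom.coe_toIntLinearMap,
        LinearMap.toAddMonoidHom_coe]
      rw [g.map_smul]
      exact Submodule.subset_span ⟨r, g e, m, rfl⟩)

end Tensor

/-- Exactness of the induced complex `E ⊗_R C` for a complex `C` of left `R`-modules. -/
def Cx.TensorExact {R : Type} [Ring R] (C : Cx R) (E : ModuleCat.{0} Rᵐᵒᵖ) : Prop :=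
  ∀ n : ℤ, LinearMap.range (tmapR R E (C.d n)) = LinearMap.ker (tmapR R E (C.d (n + 1)))

section Tensor2

variable (R : Type) [Ring R]

/-- A left `R`-module `M` is flat if `- ⊗_R M` preserves injections of right modules. -/
def IsFlat (M : ModuleCat.{0} R) : Prop :=
  ∀ (A B : ModuleCat.{0} Rᵐᵒᵖ) (g : A →ₗ[Rᵐᵒᵖ] B),
    Function.Injective g → Function.Injective (tmapL R g M)

/-- A right `R`-module `E` is flat if `E ⊗_R -` preserves injections of left modules. -/
def IsFlatR (E : ModuleCat.{0} Rᵐᵒᵖ) : Prop :=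
  ∀ (M N : ModuleCat.{0} R) (f : M →ₗ[R] N),
    Function.Injective f → Function.Injective (tmapR R E f)

end Tensor2

section Dims

variable (R : Type) [Ring R]

/-- `M` has injective dimension at most `n`. -/
def InjDimLE (M : ModuleCat.{0} R) (n : ℕ) : Prop :=
  ∃ (E : ℕ → ModuleCat.{0} R) (d : ∀ i, E i →ₗ[R] E (i + 1)) (ε : M →ₗ[R] E 0),
    (∀ i, Module.Injective R (E i)) ∧ Function.Injective ε ∧
    LinearMap.range ε = LinearMap.ker (d 0) ∧
    (∀ i, LinearMap.range (d i) = LinearMap.ker (d (i + 1))) ∧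
    (∀ i, n < i → Subsingleton (E i))

/-- `M` has projective dimension at most `n`. -/
def ProjDimLE (M : ModuleCat.{0} R) (n : ℕ) : Prop :=
  ∃ (P : ℕ → ModuleCat.{0} R) (d : ∀ i, P (i + 1) →ₗ[R] P i) (ε : P 0 →ₗ[R] M),
    (∀ i, Module.Projective R (P i)) ∧ Function.Surjective ε ∧
    LinearMap.range (d 0) = LinearMap.ker ε ∧
    (∀ i, LinearMap.range (d (i + 1)) = LinearMap.ker (d i)) ∧
    (∀ i, n < i → Subsingleton (P i))

/-- The left `R`-module `M` has flat dimension at most `n`. -/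
def FlatDimLE (M : ModuleCat.{0} R) (n : ℕ) : Prop :=
  ∃ (F : ℕ → ModuleCat.{0} R) (d : ∀ i, F (i + 1) →ₗ[R] F i) (ε : F 0 →ₗ[R] M),
    (∀ i, IsFlat R (F i)) ∧ Function.Surjective ε ∧
    LinearMap.range (d 0) = LinearMap.ker ε ∧
    (∀ i, LinearMap.range (d (i + 1)) = LinearMap.ker (d i)) ∧
    (∀ i, n < i → Subsingleton (F i))

/-- The right `R`-module `E` has flat dimension at most `n` (as a right module). -/
def FlatDimRLE (E : ModuleCat.{0} Rᵐᵒᵖ) (n : ℕ) : Prop :=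
  ∃ (F : ℕ → ModuleCat.{0} Rᵐᵒᵖ) (d : ∀ i, F (i + 1) →ₗ[Rᵐᵒᵖ] F i) (ε : F 0 →ₗ[Rᵐᵒᵖ] E),
    (∀ i, IsFlatR R (F i)) ∧ Function.Surjective ε ∧
    LinearMap.range (d 0) = LinearMap.ker ε ∧
    (∀ i, LinearMap.range (d (i + 1)) = LinearMap.ker (d i)) ∧
    (∀ i, n < i → Subsingleton (F i))

end Dims

section Conditions

variable (R : Type) [Ring R]

/-- Every acyclic complex of projective left `R`-modules is totally acyclic. -/
def AllProjTotAc : Prop :=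
  ∀ C : Cx R, C.Acyclic → (∀ n, Module.Projective R (C.X n)) →
    ∀ M : ModuleCat.{0} R, Module.Projective R M → C.HomOutExact M

/-- Every acyclic complex of injective left `R`-modules is totally acyclic. -/
def AllInjTotAc : Prop :=
  ∀ C : Cx R, C.Acyclic → (∀ n, Module.Injective R (C.X n)) →
    ∀ J : ModuleCat.{0} R, Module.Injective R J → C.HomInExact J

/-- Every acyclic complex of flat left `R`-modules is F-totally acyclic. -/
def AllFlatFTotAc : Prop :=
  ∀ C : Cx R, C.Acyclic → (∀ n, IsFlat R (C.X n)) →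
    ∀ E : ModuleCat.{0} Rᵐᵒᵖ, Module.Injective Rᵐᵒᵖ E → C.TensorExact E

/-- Every acyclic complex of projective left `R`-modules is F-totally acyclic. -/
def AllProjFTotAc : Prop :=
  ∀ C : Cx R, C.Acyclic → (∀ n, Module.Projective R (C.X n)) →
    ∀ E : ModuleCat.{0} Rᵐᵒᵖ, Module.Injective Rᵐᵒᵖ E → C.TensorExact E

end Conditions

section Gorenstein

variable (R : Type) [Ring R]

/-- `M` is Gorenstein projective: a cycle of a totally acyclic complex of projectives. -/
def IsGProj (M : ModuleCat.{0} R) : Prop :=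
  ∃ (C : Cx R) (n : ℤ), C.Acyclic ∧ (∀ k, Module.Projective R (C.X k)) ∧
    (∀ Q : ModuleCat.{0} R, Module.Projective R Q → C.HomOutExact Q) ∧
    Nonempty (M ≃ₗ[R] LinearMap.ker (C.d n))

/-- `M` is Gorenstein injective: a cycle of a totally acyclic complex of injectives. -/
def IsGInj (M : ModuleCat.{0} R) : Prop :=
  ∃ (C : Cx R) (n : ℤ), C.Acyclic ∧ (∀ k, Module.Injective R (C.X k)) ∧
    (∀ J : ModuleCat.{0} R, Module.Injective R J → C.HomInExact J) ∧
    Nonempty (M ≃ₗ[R] LinearMap.ker (C.d n))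

/-- `M` is Gorenstein flat: a cycle of an F-totally acyclic complex of flats. -/
def IsGFlat (M : ModuleCat.{0} R) : Prop :=
  ∃ (C : Cx R) (n : ℤ), C.Acyclic ∧ (∀ k, IsFlat R (C.X k)) ∧
    (∀ E : ModuleCat.{0} Rᵐᵒᵖ, Module.Injective Rᵐᵒᵖ E → C.TensorExact E) ∧
    Nonempty (M ≃ₗ[R] LinearMap.ker (C.d n))

end Gorenstein

section CharM

/-- The character group `Hom_ℤ(M, ℚ/ℤ)`. -/
abbrev CharM (M : Type) [AddCommGroup M] : Type := M →+ AddCircle (1 : ℚ)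

/-- The character module of a left module is a right module. -/
instance charModuleOp (S : Type) [Ring S] (M : Type) [AddCommGroup M] [Module S M] :
    Module Sᵐᵒᵖ (CharM M) where
  smul s f := f.comp (DistribMulAction.toAddMonoidHom M s.unop)
  one_smul f := by apply AddMonoidHom.ext; intro m; show f ((1 : S) • m) = f m; rw [one_smul]
  mul_smul s t f := by
    apply AddMonoidHom.ext; intro m
    show f (((s * t).unop) • m) = f (t.unop • s.unop • m)
    rw [MulOpposite.unop_mul, mul_smul]
  smul_zero s := by apply AddMonoidHom.ext; intro m; rfl
  smul_add s f g := by apply AddMonoidHom.ext; intro m; rfl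
  add_smul s t f := by
    apply AddMonoidHom.ext; intro m
    show f (((s + t).unop) • m) = f (s.unop • m) + f (t.unop • m)
    rw [MulOpposite.unop_add, add_smul, map_add]
  zero_smul f := by
    apply AddMonoidHom.ext; intro m
    show f ((0 : S) • m) = 0
    rw [zero_smul, map_zero]

/-- The character module of a right module is a left module. -/
instance charModuleLeft (S : Type) [Ring S] (M : Type) [AddCommGroup M] [Module Sᵐᵒᵖ M] :
    Module S (CharM M) where
  smul s f := f.comp (DistribMulAction.toAddMonoidHom M (op s))
  one_smul f := by
    apply AddMonoidHom.ext; intro m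
    show f ((op (1 : S)) • m) = f m
    rw [op_one, one_smul]
  mul_smul s t f := by
    apply AddMonoidHom.ext; intro m
    show f ((op (s * t)) • m) = f (op t • op s • m)
    rw [op_mul, mul_smul]
  smul_zero s := by apply AddMonoidHom.ext; intro m; rfl
  smul_add s f g := by apply AddMonoidHom.ext; intro m; rfl
  add_smul s t f := by
    apply AddMonoidHom.ext; intro m
    show f ((op (s + t)) • m) = f (op s • m) + f (op t • m)
    rw [op_add, add_smul, map_add]
  zero_smul f := by
    apply AddMonoidHom.ext; intro m
    show f ((op (0 : S)) • m) = 0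
    rw [op_zero, zero_smul, map_zero]

end CharM

section Ext

variable (R : Type) [Ring R]

/-- `Ext^1_R(F, M) = 0`, phrased as: every extension of `F` by `M` splits. -/
def Ext1Zero (F M : ModuleCat.{0} R) : Prop :=
  ∀ (X : ModuleCat.{0} R) (i : M →ₗ[R] X) (p : X →ₗ[R] F),
    Function.Injective i → Function.Surjective p →
    LinearMap.range i = LinearMap.ker p →
    ∃ s : F →ₗ[R] X, p.comp s = LinearMap.id

/-- `Ext^k_R(M, N) = 0` (for `k ≥ 1`), phrased via vanishing of the `k`-th cohomology of
`Hom_R(P_•, N)` for every (augmented) projective resolution `⋯ → Q (i+1) → Q i → ⋯ → Q 0 ≅ M`. -/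
def ExtVanish (k : ℕ) (M N : ModuleCat.{0} R) : Prop :=
  ∀ (Q : ℕ → ModuleCat.{0} R) (g : ∀ i, Q (i + 1) →ₗ[R] Q i),
    (∀ i, Module.Projective R (Q (i + 1))) → Function.Surjective (g 0) →
    (∀ i, LinearMap.range (g (i + 1)) = LinearMap.ker (g i)) →
    Nonempty (M ≃ₗ[R] Q 0) →
    ∀ f : Q (k + 1) →ₗ[R] N, f.comp (g (k + 1)) = 0 →
      ∃ h : Q k →ₗ[R] N, h.comp (g k) = f

end Ext

section Aux

variable {R : Type} [Ring R]

/-- The class of a simple tensor in `NCT`. -/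
def nmk (E : ModuleCat.{0} Rᵐᵒᵖ) (M : ModuleCat.{0} R) (e : E) (m : M) : NCT R E M :=
  Submodule.Quotient.mk (e ⊗ₜ[ℤ] m)

lemma nmk_zero_right (E : ModuleCat.{0} Rᵐᵒᵖ) (M : ModuleCat.{0} R) (e : E) :
    nmk E M e 0 = 0 := by
  simp [nmk, TensorProduct.tmul_zero]

lemma nmk_zero_left (E : ModuleCat.{0} Rᵐᵒᵖ) (M : ModuleCat.{0} R) (m : M) :
    nmk E M 0 m = 0 := by
  simp [nmk, TensorProduct.zero_tmul]

lemma nct_induction {E : ModuleCat.{0} Rᵐᵒᵖ} {M : ModuleCat.{0} R}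
    {p : NCT R E M → Prop} (h0 : p 0)
    (hmk : ∀ e m, p (nmk E M e m))
    (hadd : ∀ x y, p x → p y → p (x + y)) : ∀ x, p x := by
  intro x
  obtain ⟨y, rfl⟩ := Submodule.Quotient.mk_surjective _ x
  induction y using TensorProduct.induction_on with
  | zero => simpa using h0
  | tmul e m => exact hmk e m
  | add a b ha hb => rw [Submodule.Quotient.mk_add]; exact hadd _ _ ha hb

lemma nct_ext {E : ModuleCat.{0} Rᵐᵒᵖ} {M : ModuleCat.{0} R} {P : Type}
    [AddCommGroup P] [Module ℤ P] {φ ψ : NCT R E M →ₗ[ℤ] P}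
    (h : ∀ e m, φ (nmk E M e m) = ψ (nmk E M e m)) : φ = ψ := by
  refine Submodule.linearMap_qext _ (TensorProduct.ext' ?_)
  intro e m
  exact h e m

lemma tmapR_nmk {E : ModuleCat.{0} Rᵐᵒᵖ} {M N : ModuleCat.{0} R} (f : M →ₗ[R] N)
    (e : E) (m : M) :
    tmapR R E f (nmk E M e m) = nmk E N e (f m) := by
  rfl

lemma tmapL_nmk {A B : ModuleCat.{0} Rᵐᵒᵖ} {M : ModuleCat.{0} R} (g : A →ₗ[Rᵐᵒᵖ] B)
    (e : A) (m : M) :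
    tmapL R g M (nmk A M e m) = nmk B M (g e) m := by
  rfl

lemma tmapR_comp {E : ModuleCat.{0} Rᵐᵒᵖ} {M N P : ModuleCat.{0} R}
    (f : M →ₗ[R] N) (g : N →ₗ[R] P) :
    tmapR R E (g.comp f) = (tmapR R E g).comp (tmapR R E f) :=
  nct_ext fun e m => by simp [tmapR_nmk]

lemma tmapL_comp {A B C' : ModuleCat.{0} Rᵐᵒᵖ} {M : ModuleCat.{0} R}
    (f : A →ₗ[Rᵐᵒᵖ] B) (g : B →ₗ[Rᵐᵒᵖ] C') :
    tmapL R (g.comp f) M = (tmapL R g M).comp (tmapL R f M) :=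
  nct_ext fun e m => by simp [tmapL_nmk]

lemma tmapR_zero {E : ModuleCat.{0} Rᵐᵒᵖ} {M N : ModuleCat.{0} R} :
    tmapR R E (0 : M →ₗ[R] N) = 0 :=
  nct_ext fun e m => by simp [tmapR_nmk, nmk_zero_right]

lemma tmapL_zero {A B : ModuleCat.{0} Rᵐᵒᵖ} {M : ModuleCat.{0} R} :
    tmapL R (0 : A →ₗ[Rᵐᵒᵖ] B) M = 0 :=
  nct_ext fun e m => by simp [tmapL_nmk, nmk_zero_left]

lemma comm_nct {A B : ModuleCat.{0} Rᵐᵒᵖ} {M N : ModuleCat.{0} R}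
    (g : A →ₗ[Rᵐᵒᵖ] B) (f : M →ₗ[R] N) (x : NCT R A M) :
    tmapR R B f (tmapL R g M x) = tmapL R g N (tmapR R A f x) := by
  have h : (tmapR R B f).comp (tmapL R g M) = (tmapL R g N).comp (tmapR R A f) :=
    nct_ext fun e m => by simp [tmapR_nmk, tmapL_nmk]
  exact DFunLike.congr_fun h x

lemma tmapR_surjective {E : ModuleCat.{0} Rᵐᵒᵖ} {M N : ModuleCat.{0} R}
    (f : M →ₗ[R] N) (hf : Function.Surjective f) :
    Function.Surjective (tmapR R E f) := by
  intro x
  induction x using nct_induction with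
  | h0 => exact ⟨0, map_zero _⟩
  | hmk e m =>
    obtain ⟨b, rfl⟩ := hf m
    exact ⟨nmk E M e b, tmapR_nmk f e b⟩
  | hadd x y hx hy =>
    obtain ⟨a, rfl⟩ := hx
    obtain ⟨b, rfl⟩ := hy
    exact ⟨a + b, map_add _ _ _⟩

lemma tmapL_surjective {A B : ModuleCat.{0} Rᵐᵒᵖ} (g : A →ₗ[Rᵐᵒᵖ] B)
    (hg : Function.Surjective g) (M : ModuleCat.{0} R) :
    Function.Surjective (tmapL R g M) := by
  intro x
  induction x using nct_induction with
  | h0 => exact ⟨0, map_zero _⟩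
  | hmk e m =>
    obtain ⟨b, rfl⟩ := hg e
    exact ⟨nmk A M b m, tmapL_nmk g b m⟩
  | hadd x y hx hy =>
    obtain ⟨a, rfl⟩ := hx
    obtain ⟨b, rfl⟩ := hy
    exact ⟨a + b, map_add _ _ _⟩

/-- Right exactness of `E ⊗_R -` : middle exactness for a right-exact pair. -/
lemma tmapR_exact (E : ModuleCat.{0} Rᵐᵒᵖ) {A B C : ModuleCat.{0} R}
    (f : A →ₗ[R] B) (g : B →ₗ[R] C) (hg : Function.Surjective g)
    (hfg : LinearMap.range f = LinearMap.ker g) :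
    LinearMap.range (tmapR R E f) = LinearMap.ker (tmapR R E g) := by
  classical
  let gz : (B : Type) →ₗ[ℤ] (C : Type) := g.toAddMonoidHom.toIntLinearMap
  let jz : (LinearMap.ker g : Type) →ₗ[ℤ] (B : Type) :=
    (LinearMap.ker g).subtype.toAddMonoidHom.toIntLinearMap
  have hex : Function.Exact jz gz := by
    intro b
    constructor
    · intro hb
      exact ⟨⟨b, hb⟩, rfl⟩
    · rintro ⟨⟨k, hk⟩, rfl⟩
      exact hk
  have hgzs : Function.Surjective gz := hg
  have htex := lTensor_exact (E : Type) hex hgzs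
  have htsurj : Function.Surjective (LinearMap.lTensor (E : Type) gz) :=
    LinearMap.lTensor_surjective _ hgzs
  let qt : TensorProduct ℤ (E : Type) (B : Type) →ₗ[ℤ]
      (NCT R E B ⧸ LinearMap.range (tmapR R E f)) :=
    (LinearMap.range (tmapR R E f)).mkQ.comp (ncRel R E B).mkQ
  have hqt_zero : ∀ (e : E) (b : B), b ∈ LinearMap.ker g → qt (e ⊗ₜ[ℤ] b) = 0 := by
    intro e b hb
    obtain ⟨a, ha⟩ : b ∈ LinearMap.range f := by rw [hfg]; exact hb
    show (LinearMap.range (tmapR R E f)).mkQ (nmk E B e b) = 0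
    rw [Submodule.mkQ_apply, Submodule.Quotient.mk_eq_zero]
    exact ⟨nmk E A e a, by rw [tmapR_nmk, ha]⟩
  have hker : LinearMap.ker (LinearMap.lTensor (E : Type) gz) ≤ LinearMap.ker qt := by
    intro x hx
    rw [htex.linearMap_ker_eq] at hx
    obtain ⟨y, rfl⟩ := hx
    change qt (LinearMap.lTensor (E : Type) jz y) = 0
    induction y using TensorProduct.induction_on with
    | zero => simp
    | tmul e k =>
      rw [LinearMap.lTensor_tmul]
      exact hqt_zero e _ k.2
    | add a b ha hb =>
      rw [map_add, map_add, ha, hb, add_zero]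
  let ee := (LinearMap.lTensor (E : Type) gz).quotKerEquivOfSurjective htsurj
  let ψt : TensorProduct ℤ (E : Type) (C : Type) →ₗ[ℤ]
      (NCT R E B ⧸ LinearMap.range (tmapR R E f)) :=
    ((LinearMap.ker (LinearMap.lTensor (E : Type) gz)).liftQ qt hker).comp
      ee.symm.toLinearMap
  have hψt : ∀ x, ψt (LinearMap.lTensor (E : Type) gz x) = qt x := by
    intro x
    have h1 : ee (Submodule.Quotient.mk x) = LinearMap.lTensor (E : Type) gz x := by
      simp [ee, LinearMap.quotKerEquivOfSurjective]
    have h2 : ee.symm (LinearMap.lTensor (E : Type) gz x) = Submodule.Quotient.mk x := by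
      rw [← h1, LinearEquiv.symm_apply_apply]
    show ((LinearMap.ker (LinearMap.lTensor (E : Type) gz)).liftQ qt hker)
        (ee.symm (LinearMap.lTensor (E : Type) gz x)) = qt x
    rw [h2]
    rfl
  have hrel : ncRel R E C ≤ LinearMap.ker ψt := by
    rw [ncRel, Submodule.span_le]
    rintro x ⟨r, e, c, rfl⟩
    obtain ⟨b, rfl⟩ := hg c
    simp only [SetLike.mem_coe, LinearMap.mem_ker, map_sub]
    have e1 : (op r • e) ⊗ₜ[ℤ] (g b) = LinearMap.lTensor (E : Type) gz ((op r • e) ⊗ₜ[ℤ] b) :=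
      rfl
    have e2 : e ⊗ₜ[ℤ] (r • g b) = LinearMap.lTensor (E : Type) gz (e ⊗ₜ[ℤ] (r • b)) := by
      rw [LinearMap.lTensor_tmul]
      congr 1
      exact (g.map_smul r b).symm
    rw [e1, e2, hψt, hψt, ← map_sub]
    have hmem : ((op r • e) ⊗ₜ[ℤ] b - e ⊗ₜ[ℤ] (r • b)) ∈ ncRel R E B :=
      Submodule.subset_span ⟨r, e, b, rfl⟩
    show (LinearMap.range (tmapR R E f)).mkQ
        ((ncRel R E B).mkQ ((op r • e) ⊗ₜ[ℤ] b - e ⊗ₜ[ℤ] (r • b))) = 0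
    have hz0 : (ncRel R E B).mkQ ((op r • e) ⊗ₜ[ℤ] b - e ⊗ₜ[ℤ] (r • b)) = 0 := by
      rw [Submodule.mkQ_apply, Submodule.Quotient.mk_eq_zero]
      exact hmem
    rw [hz0, map_zero]
  let ψ : NCT R E C →ₗ[ℤ] (NCT R E B ⧸ LinearMap.range (tmapR R E f)) :=
    (ncRel R E C).liftQ ψt hrel
  have hcomp : ∀ x : NCT R E B,
      ψ (tmapR R E g x) = (LinearMap.range (tmapR R E f)).mkQ x := by
    intro x
    induction x using nct_induction with
    | h0 => simp
    | hmk e b =>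
      rw [tmapR_nmk]
      show ψt (e ⊗ₜ[ℤ] (g b)) = _
      rw [show (e ⊗ₜ[ℤ] (g b) : TensorProduct ℤ (E : Type) (C : Type)) =
        LinearMap.lTensor (E : Type) gz (e ⊗ₜ[ℤ] b) from rfl, hψt]
      rfl
    | hadd x y hx hy => rw [map_add, map_add, hx, hy, map_add]
  apply le_antisymm
  · rintro _ ⟨y, rfl⟩
    rw [LinearMap.mem_ker, ← LinearMap.comp_apply, ← tmapR_comp]
    have hgf : g.comp f = 0 := by
      ext a
      have : f a ∈ LinearMap.ker g := hfg ▸ LinearMap.mem_range_self f a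
      simpa using this
    rw [hgf, tmapR_zero]
    rfl
  · intro x hx
    rw [LinearMap.mem_ker] at hx
    have hh := hcomp x
    rw [hx, map_zero] at hh
    have : (LinearMap.range (tmapR R E f)).mkQ x = 0 := hh.symm
    rwa [Submodule.mkQ_apply, Submodule.Quotient.mk_eq_zero] at this

/-- Right exactness of `- ⊗_R M` : middle exactness for a right-exact pair. -/
lemma tmapL_exact {A B C : ModuleCat.{0} Rᵐᵒᵖ}
    (f : A →ₗ[Rᵐᵒᵖ] B) (g : B →ₗ[Rᵐᵒᵖ] C) (hg : Function.Surjective g)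
    (hfg : LinearMap.range f = LinearMap.ker g) (M : ModuleCat.{0} R) :
    LinearMap.range (tmapL R f M) = LinearMap.ker (tmapL R g M) := by
  classical
  let gz : (B : Type) →ₗ[ℤ] (C : Type) := g.toAddMonoidHom.toIntLinearMap
  let jz : (LinearMap.ker g : Type) →ₗ[ℤ] (B : Type) :=
    (LinearMap.ker g).subtype.toAddMonoidHom.toIntLinearMap
  have hex : Function.Exact jz gz := by
    intro b
    constructor
    · intro hb
      exact ⟨⟨b, hb⟩, rfl⟩
    · rintro ⟨⟨k, hk⟩, rfl⟩
      exact hk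
  have hgzs : Function.Surjective gz := hg
  have htex := rTensor_exact (M : Type) hex hgzs
  have htsurj : Function.Surjective (LinearMap.rTensor (M : Type) gz) :=
    LinearMap.rTensor_surjective _ hgzs
  let qt : TensorProduct ℤ (B : Type) (M : Type) →ₗ[ℤ]
      (NCT R B M ⧸ LinearMap.range (tmapL R f M)) :=
    (LinearMap.range (tmapL R f M)).mkQ.comp (ncRel R B M).mkQ
  have hqt_zero : ∀ (b : B) (m : M), b ∈ LinearMap.ker g → qt (b ⊗ₜ[ℤ] m) = 0 := by
    intro b m hb
    obtain ⟨a, ha⟩ : b ∈ LinearMap.range f := by rw [hfg]; exact hb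
    show (LinearMap.range (tmapL R f M)).mkQ (nmk B M b m) = 0
    rw [Submodule.mkQ_apply, Submodule.Quotient.mk_eq_zero]
    exact ⟨nmk A M a m, by rw [tmapL_nmk, ha]⟩
  have hker : LinearMap.ker (LinearMap.rTensor (M : Type) gz) ≤ LinearMap.ker qt := by
    intro x hx
    rw [htex.linearMap_ker_eq] at hx
    obtain ⟨y, rfl⟩ := hx
    change qt (LinearMap.rTensor (M : Type) jz y) = 0
    induction y using TensorProduct.induction_on with
    | zero => simp
    | tmul k m =>
      rw [LinearMap.rTensor_tmul]
      exact hqt_zero _ m k.2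
    | add a b ha hb =>
      rw [map_add, map_add, ha, hb, add_zero]
  let ee := (LinearMap.rTensor (M : Type) gz).quotKerEquivOfSurjective htsurj
  let ψt : TensorProduct ℤ (C : Type) (M : Type) →ₗ[ℤ]
      (NCT R B M ⧸ LinearMap.range (tmapL R f M)) :=
    ((LinearMap.ker (LinearMap.rTensor (M : Type) gz)).liftQ qt hker).comp
      ee.symm.toLinearMap
  have hψt : ∀ x, ψt (LinearMap.rTensor (M : Type) gz x) = qt x := by
    intro x
    have h1 : ee (Submodule.Quotient.mk x) = LinearMap.rTensor (M : Type) gz x := by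
      simp [ee, LinearMap.quotKerEquivOfSurjective]
    have h2 : ee.symm (LinearMap.rTensor (M : Type) gz x) = Submodule.Quotient.mk x := by
      rw [← h1, LinearEquiv.symm_apply_apply]
    show ((LinearMap.ker (LinearMap.rTensor (M : Type) gz)).liftQ qt hker)
        (ee.symm (LinearMap.rTensor (M : Type) gz x)) = qt x
    rw [h2]
    rfl
  have hrel : ncRel R C M ≤ LinearMap.ker ψt := by
    rw [ncRel, Submodule.span_le]
    rintro x ⟨r, e, m, rfl⟩
    obtain ⟨b, rfl⟩ := hg e
    simp only [SetLike.mem_coe, LinearMap.mem_ker, map_sub]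
    have e1 : (op r • g b) ⊗ₜ[ℤ] m = LinearMap.rTensor (M : Type) gz ((op r • b) ⊗ₜ[ℤ] m) := by
      rw [LinearMap.rTensor_tmul]
      congr 1
      exact (g.map_smul (op r) b).symm
    have e2 : (g b) ⊗ₜ[ℤ] (r • m) = LinearMap.rTensor (M : Type) gz (b ⊗ₜ[ℤ] (r • m)) :=
      rfl
    rw [e1, e2, hψt, hψt, ← map_sub]
    have hmem : ((op r • b) ⊗ₜ[ℤ] m - b ⊗ₜ[ℤ] (r • m)) ∈ ncRel R B M :=
      Submodule.subset_span ⟨r, b, m, rfl⟩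
    show (LinearMap.range (tmapL R f M)).mkQ
        ((ncRel R B M).mkQ ((op r • b) ⊗ₜ[ℤ] m - b ⊗ₜ[ℤ] (r • m))) = 0
    have hz0 : (ncRel R B M).mkQ ((op r • b) ⊗ₜ[ℤ] m - b ⊗ₜ[ℤ] (r • m)) = 0 := by
      rw [Submodule.mkQ_apply, Submodule.Quotient.mk_eq_zero]
      exact hmem
    rw [hz0, map_zero]
  let ψ : NCT R C M →ₗ[ℤ] (NCT R B M ⧸ LinearMap.range (tmapL R f M)) :=
    (ncRel R C M).liftQ ψt hrel
  have hcomp : ∀ x : NCT R B M,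
      ψ (tmapL R g M x) = (LinearMap.range (tmapL R f M)).mkQ x := by
    intro x
    induction x using nct_induction with
    | h0 => simp
    | hmk b m =>
      rw [tmapL_nmk]
      show ψt ((g b) ⊗ₜ[ℤ] m) = _
      rw [show ((g b) ⊗ₜ[ℤ] m : TensorProduct ℤ (C : Type) (M : Type)) =
        LinearMap.rTensor (M : Type) gz (b ⊗ₜ[ℤ] m) from rfl, hψt]
      rfl
    | hadd x y hx hy => rw [map_add, map_add, hx, hy, map_add]
  apply le_antisymm
  · rintro _ ⟨y, rfl⟩
    rw [LinearMap.mem_ker, ← LinearMap.comp_apply, ← tmapL_comp]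
    have hgf : g.comp f = 0 := by
      ext a
      have : f a ∈ LinearMap.ker g := hfg ▸ LinearMap.mem_range_self f a
      simpa using this
    rw [hgf, tmapL_zero]
    rfl
  · intro x hx
    rw [LinearMap.mem_ker] at hx
    have hh := hcomp x
    rw [hx, map_zero] at hh
    have : (LinearMap.range (tmapL R f M)).mkQ x = 0 := hh.symm
    rwa [Submodule.mkQ_apply, Submodule.Quotient.mk_eq_zero] at this

/-- A flat right module tensored with an acyclic complex stays acyclic. -/
lemma flat_tensorExact (E : ModuleCat.{0} Rᵐᵒᵖ) (hE : IsFlatR R E)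
    (C : Cx R) (hC : C.Acyclic) : C.TensorExact E := by
  intro n
  let Z : ModuleCat.{0} R := ModuleCat.of R ↥(LinearMap.ker (C.d (n+1)))
  let W : ModuleCat.{0} R := ModuleCat.of R ↥(LinearMap.ker (C.d (n+1+1)))
  let π : C.X n →ₗ[R] Z := LinearMap.codRestrict _ (C.d n)
    (fun x => by rw [← hC n]; exact LinearMap.mem_range_self _ x)
  let π' : C.X (n+1) →ₗ[R] W := LinearMap.codRestrict _ (C.d (n+1))
    (fun x => by rw [← hC (n+1)]; exact LinearMap.mem_range_self _ x)
  let ι : Z →ₗ[R] C.X (n+1) := (LinearMap.ker (C.d (n+1))).subtype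
  let ι' : W →ₗ[R] C.X (n+1+1) := (LinearMap.ker (C.d (n+1+1))).subtype
  have hπs : Function.Surjective π := by
    rintro ⟨z, hz⟩
    rw [← hC n] at hz
    obtain ⟨x, rfl⟩ := hz
    exact ⟨x, rfl⟩
  have hπ's : Function.Surjective π' := by
    rintro ⟨z, hz⟩
    rw [← hC (n+1)] at hz
    obtain ⟨x, rfl⟩ := hz
    exact ⟨x, rfl⟩
  have hdn : C.d n = ι.comp π := LinearMap.ext fun x => rfl
  have hd1 : C.d (n+1) = ι'.comp π' := LinearMap.ext fun x => rfl
  have step1 : LinearMap.range (tmapR R E (C.d n)) = LinearMap.range (tmapR R E ι) := by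
    rw [hdn, tmapR_comp]
    exact LinearMap.range_comp_of_range_eq_top _
      (LinearMap.range_eq_top.2 (tmapR_surjective π hπs))
  have step2 : LinearMap.range (tmapR R E ι) = LinearMap.ker (tmapR R E π') :=
    tmapR_exact E ι π' hπ's
      (by rw [Submodule.range_subtype, LinearMap.ker_codRestrict])
  have step3 : LinearMap.ker (tmapR R E (C.d (n+1))) = LinearMap.ker (tmapR R E π') := by
    rw [hd1, tmapR_comp, LinearMap.ker_comp,
      LinearMap.ker_eq_bot.2 (hE W (C.X (n+1+1)) ι' (Submodule.injective_subtype _)),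
      Submodule.comap_bot]
  rw [step1, step2, step3]

/-- A subsingleton right module tensored with anything gives exactness for free. -/
lemma subsingleton_tensorExact (K : ModuleCat.{0} Rᵐᵒᵖ) (hK : Subsingleton (K : Type))
    (C : Cx R) : C.TensorExact K := by
  have hz : ∀ (M : ModuleCat.{0} R) (x : NCT R K M), x = 0 := by
    intro M x
    induction x using nct_induction with
    | h0 => rfl
    | hmk e m =>
      rw [Subsingleton.elim e 0]
      exact nmk_zero_left K M m
    | hadd x y hx hy => rw [hx, hy, add_zero]
  intro n
  ext x
  rw [hz _ x]
  simp

/-- The diagram chase: in a short exact sequence of right modules, if the two outer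
terms tensor exactly with a complex of flats, so does the third. -/
lemma tensorExact_of_ses {K F0 E : ModuleCat.{0} Rᵐᵒᵖ}
    (i : K →ₗ[Rᵐᵒᵖ] F0) (p : F0 →ₗ[Rᵐᵒᵖ] E)
    (hi : Function.Injective i) (hp : Function.Surjective p)
    (hip : LinearMap.range i = LinearMap.ker p)
    (C : Cx R) (hflat : ∀ k, IsFlat R (C.X k))
    (hK : C.TensorExact K) (hF : C.TensorExact F0) :
    C.TensorExact E := by
  intro n
  apply le_antisymm
  · rintro _ ⟨y, rfl⟩
    rw [LinearMap.mem_ker, ← LinearMap.comp_apply, ← tmapR_comp, C.dd n, tmapR_zero]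
    rfl
  · intro z hz
    rw [LinearMap.mem_ker] at hz
    obtain ⟨y, hy⟩ := tmapL_surjective p hp (C.X (n+1)) z
    have h1 : tmapL R p (C.X (n+1+1)) (tmapR R F0 (C.d (n+1)) y) = 0 := by
      rw [← comm_nct, hy, hz]
    have h2 : tmapR R F0 (C.d (n+1)) y ∈
        LinearMap.ker (tmapL R p (C.X (n+1+1))) := h1
    rw [← tmapL_exact i p hp hip (C.X (n+1+1))] at h2
    obtain ⟨w, hw⟩ := h2
    have hddy : tmapR R F0 (C.d (n+1+1)) (tmapR R F0 (C.d (n+1)) y) = 0 := by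
      rw [← LinearMap.comp_apply, ← tmapR_comp, C.dd (n+1), tmapR_zero]
      rfl
    have h3 : tmapL R i (C.X (n+1+1+1)) (tmapR R K (C.d (n+1+1)) w) = 0 := by
      rw [← comm_nct, hw, hddy]
    have h4 : tmapR R K (C.d (n+1+1)) w = 0 := by
      apply hflat (n+1+1+1) K F0 i hi
      rw [h3, map_zero]
    have h5 : w ∈ LinearMap.ker (tmapR R K (C.d (n+1+1))) := h4
    rw [← hK (n+1)] at h5
    obtain ⟨w', hw'⟩ := h5
    have h6 : tmapR R F0 (C.d (n+1)) (y - tmapL R i (C.X (n+1)) w') = 0 := by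
      rw [map_sub, comm_nct, hw', hw, sub_self]
    have h7 : (y - tmapL R i (C.X (n+1)) w') ∈
        LinearMap.ker (tmapR R F0 (C.d (n+1))) := h6
    rw [← hF n] at h7
    obtain ⟨u, hu⟩ := h7
    refine ⟨tmapL R p (C.X n) u, ?_⟩
    have hpi : p.comp i = 0 := by
      ext k
      have : i k ∈ LinearMap.ker p := hip ▸ LinearMap.mem_range_self i k
      simpa using this
    have hpi' : tmapL R p (C.X (n+1)) (tmapL R i (C.X (n+1)) w') = 0 := by
      rw [← LinearMap.comp_apply, ← tmapL_comp, hpi, tmapL_zero]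
      rfl
    rw [comm_nct, hu, map_sub, hy, hpi', sub_zero]

/-- Main induction: finite flat dimension of `E` implies `E` tensors exactly with
every acyclic complex of flats. -/
lemma main_ind : ∀ (n : ℕ) (E : ModuleCat.{0} Rᵐᵒᵖ), FlatDimRLE R E n →
    ∀ C : Cx R, C.Acyclic → (∀ k, IsFlat R (C.X k)) → C.TensorExact E := by
  intro n
  induction n with
  | zero =>
    intro E hE C hac hfl
    obtain ⟨F, d, ε, hFflat, hεsurj, hr0, hri, hsub⟩ := hE
    have hKsub : Subsingleton ↥(LinearMap.ker ε) := by
      constructor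
      rintro ⟨a, ha⟩ ⟨b, hb⟩
      have hzero : ∀ x ∈ LinearMap.ker ε, x = 0 := by
        intro x hx
        rw [← hr0] at hx
        obtain ⟨y, rfl⟩ := hx
        haveI := hsub 1 (by norm_num)
        rw [Subsingleton.elim y 0, map_zero]
      exact Subtype.ext ((hzero a ha).trans (hzero b hb).symm)
    exact tensorExact_of_ses (K := ModuleCat.of Rᵐᵒᵖ ↥(LinearMap.ker ε))
      (LinearMap.ker ε).subtype ε (Submodule.injective_subtype _) hεsurj
      (Submodule.range_subtype _) C hfl
      (subsingleton_tensorExact _ hKsub C)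
      (flat_tensorExact (F 0) (hFflat 0) C hac)
  | succ n ih =>
    intro E hE C hac hfl
    obtain ⟨F, d, ε, hFflat, hεsurj, hr0, hri, hsub⟩ := hE
    have hKdim : FlatDimRLE R (ModuleCat.of Rᵐᵒᵖ ↥(LinearMap.ker ε)) n := by
      refine ⟨fun i => F (i+1), fun i => d (i+1),
        LinearMap.codRestrict _ (d 0)
          (fun x => by rw [← hr0]; exact LinearMap.mem_range_self _ x),
        fun i => hFflat (i+1), ?_, ?_, fun i => hri (i+1),
        fun i hi => hsub (i+1) (by omega)⟩
      · rintro ⟨x, hx⟩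
        rw [← hr0] at hx
        obtain ⟨y, rfl⟩ := hx
        exact ⟨y, rfl⟩
      · rw [LinearMap.ker_codRestrict]
        exact hri 0
    have hKT := ih (ModuleCat.of Rᵐᵒᵖ ↥(LinearMap.ker ε)) hKdim C hac hfl
    exact tensorExact_of_ses (K := ModuleCat.of Rᵐᵒᵖ ↥(LinearMap.ker ε))
      (LinearMap.ker ε).subtype ε (Submodule.injective_subtype _) hεsurj
      (Submodule.range_subtype _) C hfl hKT
      (flat_tensorExact (F 0) (hFflat 0) C hac)

end Aux

/-- if every injective right `R`-module has flat dimension at most `n`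
(`sfli Rᵒᵖ ≤ n`), then every acyclic complex of flat left `R`-modules is F-totally acyclic. -/
theorem stmt3 (R : Type) [Ring R] (n : ℕ)
    (h : ∀ E : ModuleCat.{0} Rᵐᵒᵖ, Module.Injective Rᵐᵒᵖ E → FlatDimRLE R E n) :
    AllFlatFTotAc R := by
  intro C hac hflat E hinj
  exact main_ind n E (h E hinj) C hac hflat
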